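/- Let A = (a_1,…,a_n) and B = (b_1,…,b_m) be integer strings with all entries at least 2, and set p = K(a_1,…,a_n), q = K(a_2,…,a_n), r = K(b_1,…,b_m), s = K(b_2,…,b_m), so that p > q > 0 and r > s > 0 with gcd(p,q) = gcd(r,s) = 1. Let q* be the unique integer with 0 < q* < p and q·q* ≡ 1 (mod p). Then the pair (A, B) is complementary if and only if q*/p + s/r = 1 in the rational numbers. -/

import Mathlib

/-- The negative continuant `K(a₁,…,aₙ)`, defined by `K() = 1`, `K(a) = a`, and
`K(a₁,a₂,…,aₙ) = a₁·K(a₂,…,aₙ) − K(a₃,…,aₙ)`. -/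
def negCont : List ℤ → ℤ
  | [] => 1
  | [a] => a
  | a :: b :: l => a * negCont (b :: l) - negCont l

/-- A 2-final expansion of a pair of integer strings: it transforms
`((a₁,…,aₙ),(b₁,…,bₘ))` into either `((a₁+1,a₂,…,aₙ),(b₁,…,bₘ,2))` or
`((2,a₁,…,aₙ),(b₁,…,bₘ₋₁,bₘ+1))`. -/
def TwoFinalExp : List ℤ × List ℤ → List ℤ × List ℤ → Prop := fun P Q =>
  (∃ (a : ℤ) (A B : List ℤ), P = (a :: A, B) ∧ Q = ((a + 1) :: A, B ++ [2])) ∨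
  (∃ (A B : List ℤ) (b : ℤ), P = (A, B ++ [b]) ∧ Q = (2 :: A, B ++ [b + 1]))

/-- A pair of integer strings is complementary if it is obtained from the pair
`((2),(2))` by a finite (possibly empty) sequence of 2-final expansions. -/
def Complementary (A B : List ℤ) : Prop :=
  Relation.ReflTransGen TwoFinalExp ([2], [2]) (A, B)

/-! ### Auxiliary machinery: the matrix of continuants -/

structure Ct where
  p : ℤ
  p' : ℤ
  q : ℤ
  q' : ℤ

def ct : List ℤ → Ct
  | [] => ⟨1, 0, 0, -1⟩
  | a :: l => ⟨a * (ct l).p - (ct l).q, a * (ct l).p' - (ct l).q', (ct l).p, (ct l).p'⟩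

lemma ct_nil : ct [] = ⟨1, 0, 0, -1⟩ := rfl

lemma ct_cons (a : ℤ) (l : List ℤ) :
    ct (a :: l) = ⟨a * (ct l).p - (ct l).q, a * (ct l).p' - (ct l).q', (ct l).p, (ct l).p'⟩ :=
  rfl

lemma ct_append (l : List ℤ) (b : ℤ) :
    ct (l ++ [b]) = ⟨b * (ct l).p - (ct l).p', (ct l).p, b * (ct l).q - (ct l).q', (ct l).q⟩ := by
  induction l with
  | nil => simp [ct]
  | cons a l ih =>
    rw [List.cons_append, ct_cons, ct_cons, ih]
    simp only [Ct.mk.injEq]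
    refine ⟨by ring, trivial, trivial, trivial⟩

lemma negCont_ct (l : List ℤ) : negCont l = (ct l).p := by
  suffices h : ∀ (n : ℕ) (l : List ℤ), l.length ≤ n → negCont l = (ct l).p from
    h l.length l le_rfl
  intro n
  induction n with
  | zero =>
    intro l hl
    have h0 : l = [] := List.eq_nil_of_length_eq_zero (by omega)
    subst h0; rfl
  | succ n ih =>
    intro l hl
    match l with
    | [] => rfl
    | [a] => simp [negCont, ct]
    | a :: b :: m =>
      have h1 : negCont (b :: m) = (ct (b :: m)).p := by
        apply ih; simp at hl ⊢; omega
      have h2 : negCont m = (ct m).p := by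
        apply ih; simp at hl ⊢; omega
      rw [negCont, h1, h2, ct_cons (a := a), ct_cons (a := b)]

lemma ct_det (l : List ℤ) : (ct l).p' * (ct l).q - (ct l).p * (ct l).q' = 1 := by
  induction l with
  | nil => simp [ct]
  | cons a t ih => rw [ct_cons]; dsimp only; linear_combination ih

lemma ct_bounds (l : List ℤ) (h : ∀ a ∈ l, 2 ≤ a) :
    (ct l).q < (ct l).p ∧ (ct l).q' < (ct l).p' ∧ 0 ≤ (ct l).q ∧
    (ct l).q - (ct l).q' ≤ (ct l).p - (ct l).p' ∧
    (ct l).p' < (ct l).p ∧ 0 ≤ (ct l).p' ∧ (l.length : ℤ) + 1 ≤ (ct l).p := by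
  induction l with
  | nil => simp [ct]
  | cons a t ih =>
    have ha : 2 ≤ a := h a (by simp)
    obtain ⟨h1, h2, h3, h4, h5, h6, h7⟩ := ih (fun x hx => h x (by simp [hx]))
    have hlen : (0 : ℤ) ≤ (t.length : ℤ) := Int.natCast_nonneg _
    have k1 : 0 ≤ (a - 2) * (ct t).p := by nlinarith
    have k2 : 0 ≤ (a - 2) * (ct t).p' := by nlinarith
    have k3 : 0 ≤ (a - 2) * ((ct t).p - (ct t).p') := by nlinarith
    rw [ct_cons]
    dsimp only
    refine ⟨by nlinarith, by nlinarith, by nlinarith, by nlinarith, by nlinarith,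
      by nlinarith, ?_⟩
    rw [List.length_cons]
    push_cast
    nlinarith

lemma ct_cons_pos (a : ℤ) (t : List ℤ) (h : ∀ x ∈ a :: t, 2 ≤ x) :
    1 ≤ (ct (a :: t)).p' ∧ 0 ≤ (ct (a :: t)).q' ∧ 1 ≤ (ct (a :: t)).q ∧
      2 ≤ (ct (a :: t)).p := by
  have ha : 2 ≤ a := h a (by simp)
  obtain ⟨h1, h2, h3, h4, h5, h6, h7⟩ := ct_bounds t (fun x hx => h x (by simp [hx]))
  have hlen : (0 : ℤ) ≤ (t.length : ℤ) := Int.natCast_nonneg _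
  rw [ct_cons]
  dsimp only
  refine ⟨by nlinarith, by nlinarith, by nlinarith, by nlinarith⟩

/-- Uniqueness of "modular inverse"-type data. -/
lemma uniq {r u x y x' y' : ℤ} (hr : 0 < r) (h1 : x * u - r * y = 1)
    (h2 : x' * u - r * y' = 1) (hx1 : 0 < x) (hx2 : x < r) (hx1' : 0 < x')
    (hx2' : x' < r) : x = x' ∧ y = y' := by
  have hco : IsCoprime r u := ⟨-y, x, by linear_combination h1⟩
  have hdvd : r ∣ (x - x') * u := ⟨y - y', by linear_combination h1 - h2⟩
  have h3 : r ∣ x - x' := hco.dvd_of_dvd_mul_right hdvd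
  obtain ⟨c, hc⟩ := h3
  have hc1 : c < 1 := by nlinarith
  have hc2 : -1 < c := by nlinarith
  have hc0 : c = 0 := by omega
  have hxx : x = x' := by rw [hc0] at hc; linarith
  refine ⟨hxx, ?_⟩
  have : r * y = r * y' := by rw [hxx] at h1; linarith
  exact mul_left_cancel₀ (ne_of_gt hr) this

/-! ### Forward direction -/

lemma compl_fwd {A B : List ℤ} (h : Complementary A B) :
    A ≠ [] ∧ B ≠ [] ∧ (ct B).p = (ct A).p ∧ (ct B).p' = (ct A).p - (ct A).q ∧
    (ct B).q = (ct A).p - (ct A).p' ∧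
    (ct B).q' = (ct A).p - (ct A).q - (ct A).p' + (ct A).q' := by
  suffices H : ∀ x : List ℤ × List ℤ, Relation.ReflTransGen TwoFinalExp ([2], [2]) x →
      x.1 ≠ [] ∧ x.2 ≠ [] ∧ (ct x.2).p = (ct x.1).p ∧ (ct x.2).p' = (ct x.1).p - (ct x.1).q ∧
      (ct x.2).q = (ct x.1).p - (ct x.1).p' ∧
      (ct x.2).q' = (ct x.1).p - (ct x.1).q - (ct x.1).p' + (ct x.1).q' from
    H (A, B) h
  intro x hx
  induction hx with
  | refl => refine ⟨by simp, by simp, ?_, ?_, ?_, ?_⟩ <;> norm_num [ct]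
  | tail hsteps hstep ih =>
    rcases hstep with ⟨a, A, B, hPb, hPc⟩ | ⟨A, B, b, hPb, hPc⟩
    · subst hPb; subst hPc
      obtain ⟨-, -, e1, e2, e3, e4⟩ := ih
      rw [ct_cons] at e1 e2 e3 e4
      dsimp only at e1 e2 e3 e4 ⊢
      rw [ct_append, ct_cons]
      refine ⟨by simp, by simp, ?_, ?_, ?_, ?_⟩ <;> dsimp only
      · linear_combination 2 * e1 - e2
      · linear_combination e1
      · linear_combination 2 * e3 - e4
      · linear_combination e3
    · subst hPb; subst hPc
      obtain ⟨-, -, e1, e2, e3, e4⟩ := ih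
      rw [ct_append] at e1 e2 e3 e4
      dsimp only at e1 e2 e3 e4 ⊢
      rw [ct_append, ct_cons]
      refine ⟨by simp, by simp, ?_, ?_, ?_, ?_⟩ <;> dsimp only
      · linear_combination e1 + e2
      · linear_combination e2
      · linear_combination e3 + e4
      · linear_combination e4

/-! ### Backward direction -/

lemma inv_compl : ∀ (n : ℕ) (A B : List ℤ), A.length + B.length ≤ n →
    A ≠ [] → B ≠ [] → (∀ a ∈ A, 2 ≤ a) → (∀ b ∈ B, 2 ≤ b) →
    (ct B).p = (ct A).p → (ct B).q = (ct A).p - (ct A).p' → Complementary A B := by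
  intro n
  induction n with
  | zero =>
    intro A B hlen hA _ _ _ _ _
    exfalso
    have : A.length = 0 := by omega
    exact hA (List.length_eq_zero_iff.mp this)
  | succ n ih =>
    intro A B hlen hAne hBne entA entB hp hq
    obtain ⟨a, T, rfl⟩ := List.exists_cons_of_ne_nil hAne
    obtain ⟨C, b, hBeq⟩ : ∃ C b, B = C ++ [b] := by
      rcases List.eq_nil_or_concat B with h1 | ⟨C, b, h1⟩
      · exact absurd h1 hBne
      · exact ⟨C, b, by simpa [List.concat_eq_append] using h1⟩
    subst hBeq
    have ha : 2 ≤ a := entA a (by simp)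
    have hb : 2 ≤ b := entB b (by simp)
    have entT : ∀ x ∈ T, 2 ≤ x := fun x hx => entA x (by simp [hx])
    have entC : ∀ x ∈ C, 2 ≤ x := fun x hx => entB x (by simp [hx])
    obtain ⟨t1, t2, t3, t4, t5, t6, t7⟩ := ct_bounds T entT
    obtain ⟨z1, z2, z3, z4, z5, z6, z7⟩ := ct_bounds C entC
    obtain ⟨bA1, bA2, bA3, bA4⟩ := ct_cons_pos a T entA
    have hlenC : (0 : ℤ) ≤ (C.length : ℤ) := Int.natCast_nonneg _
    have hlenT : (0 : ℤ) ≤ (T.length : ℤ) := Int.natCast_nonneg _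
    -- unpack the two given equations
    rw [ct_append, ct_cons] at hp hq
    dsimp only at hp hq
    -- identify (ct C).p and (ct C).q via the uniqueness lemma
    have detB := ct_det (C ++ [b])
    rw [ct_append] at detB
    dsimp only at detB
    have detA := ct_det (a :: T)
    rw [ct_cons] at detA
    dsimp only at detA
    obtain ⟨A1, A2, A3, A4, A5, A6, A7⟩ := ct_bounds (a :: T) entA
    rw [ct_cons] at A1 A2 A3 A4 A5 A6 A7
    dsimp only at A1 A2 A3 A4 A5 A6 A7
    obtain ⟨B1, B2, B3, B4, B5, B6, B7⟩ := ct_bounds (C ++ [b]) entB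
    rw [ct_append] at B1 B2 B3 B4 B5 B6 B7
    dsimp only at B1 B2 B3 B4 B5 B6 B7
    set tp := (ct T).p with htp
    set tp' := (ct T).p' with htp'
    set tq := (ct T).q with htq
    set tq' := (ct T).q' with htq'
    set zp := (ct C).p with hzp
    set zp' := (ct C).p' with hzp'
    set zq := (ct C).q with hzq
    set zq' := (ct C).q' with hzq'
    have htp1 : 1 ≤ tp := by linarith
    have hxp : (0 : ℤ) < a * tp - tq := by linarith
    have key : zp = (a * tp - tq) - tp ∧ zq = (a * tp - tq) - tp - (a * tp' - tq') + tp' := by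
      have e1 : zp * ((a * tp - tq) - (a * tp' - tq')) - (a * tp - tq) * zq = 1 := by
        linear_combination detB - zp * hq + zq * hp
      have e2 : ((a * tp - tq) - tp) * ((a * tp - tq) - (a * tp' - tq')) -
          (a * tp - tq) * ((a * tp - tq) - tp - (a * tp' - tq') + tp') = 1 := by
        linear_combination detA
      exact uniq hxp e1 e2 (by linarith) (by linarith) (by linarith) (by linarith)
    obtain ⟨Zp, Zq⟩ := key
    have hzp0 : 0 < zp := by linarith
    by_cases ha3 : 3 ≤ a
    · -- undo a type-1 expansion: last entry of B must be 2
      have h2xq : 2 * tp ≤ a * tp - tq := by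
        have k := mul_le_mul_of_nonneg_right (show (3:ℤ) ≤ a from ha3)
          (show (0:ℤ) ≤ tp by linarith)
        linarith
      have hCne : C ≠ [] := by
        intro hC
        have e0 : zq = 0 := by rw [hzq, hC]; rfl
        have e0' : zq' = -1 := by rw [hzq', hC]; rfl
        rw [e0, e0'] at hq
        have k := mul_le_mul_of_nonneg_right (show (3:ℤ) ≤ a from ha3)
          (show (0:ℤ) ≤ tp - tp' by linarith)
        linarith
      have hzp'1 : 1 ≤ zp' := by
        obtain ⟨c, m, hCm⟩ := List.exists_cons_of_ne_nil hCne
        have := (ct_cons_pos c m (by rw [← hCm]; exact entC)).1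
        rw [← hCm] at this
        rw [hzp']; exact this
      have hb2 : b = 2 := by
        have e1 : b * zp < 3 * zp := by linarith
        have e2 : 1 * zp < b * zp := by linarith
        have l1 : b < 3 := lt_of_mul_lt_mul_right e1 (le_of_lt hzp0)
        have l2 : 1 < b := lt_of_mul_lt_mul_right e2 (le_of_lt hzp0)
        omega
      have hcompl : Complementary ((a - 1) :: T) C := by
        refine ih ((a - 1) :: T) C (by simp at hlen ⊢; omega) (by simp) hCne ?_ entC ?_ ?_
        · intro x hx
          rcases List.mem_cons.mp hx with h | h
          · omega
          · exact entT x h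
        · rw [ct_cons]; dsimp only
          simp only [← htp, ← htp', ← htq, ← htq', ← hzp, ← hzp', ← hzq, ← hzq']
          linear_combination Zp
        · rw [ct_cons]; dsimp only
          simp only [← htp, ← htp', ← htq, ← htq', ← hzp, ← hzp', ← hzq, ← hzq']
          linear_combination Zq
      refine Relation.ReflTransGen.tail hcompl (Or.inl ⟨a - 1, T, C, rfl, ?_⟩)
      rw [hb2, sub_add_cancel]
    · -- a = 2
      have ha2 : a = 2 := by omega
      have hatp : a * tp = 2 * tp := by rw [ha2]
      by_cases hT : T = []
      · -- A = [2], so B = [2]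
        have etp : tp = 1 := by rw [htp, hT]; rfl
        have etq : tq = 0 := by rw [htq, hT]; rfl
        have hC : C = [] := by
          apply List.eq_nil_of_length_eq_zero
          have hlb : ((C ++ [b]).length : ℤ) = (C.length : ℤ) + 1 := by
            simp
          have : (C.length : ℤ) ≤ 0 := by
            rw [hlb] at B7
            linarith
          omega
        have ezp : zp = 1 := by rw [hzp, hC]; rfl
        have ezp' : zp' = 0 := by rw [hzp', hC]; rfl
        have hbb : b = 2 := by
          rw [ezp, ezp', etp, etq] at hp
          linarith
        rw [hT, hC, ha2, hbb]
        exact Relation.ReflTransGen.refl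
      · -- undo a type-2 expansion: last entry of B is at least 3
        have htq1 : 1 ≤ tq := by
          obtain ⟨c, m, hTm⟩ := List.exists_cons_of_ne_nil hT
          have := (ct_cons_pos c m (by rw [← hTm]; exact entT)).2.2.1
          rw [← hTm] at this
          rw [htq]; exact this
        have hb3 : 3 ≤ b := by
          have e1 : 2 * zp < b * zp := by linarith
          have := lt_of_mul_lt_mul_right e1 (le_of_lt hzp0)
          omega
        have hcompl : Complementary T (C ++ [b - 1]) := by
          refine ih T (C ++ [b - 1]) (by simp at hlen ⊢; omega) hT (by simp) entT ?_ ?_ ?_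
          · intro x hx
            rcases List.mem_append.mp hx with h | h
            · exact entC x h
            · simp at h; omega
          · rw [ct_append]; dsimp only
            simp only [← htp, ← htp', ← htq, ← htq', ← hzp, ← hzp', ← hzq, ← hzq']
            linear_combination hp - Zp
          · rw [ct_append]; dsimp only
            simp only [← htp, ← htp', ← htq, ← htq', ← hzp, ← hzp', ← hzq, ← hzq']
            linear_combination hq - Zq
        refine Relation.ReflTransGen.tail hcompl (Or.inr ⟨T, C, b - 1, rfl, ?_⟩)
        rw [sub_add_cancel, ha2]

theorem stmt5 (A B : List ℤ) (hA : ∀ a ∈ A, 2 ≤ a) (hB : ∀ b ∈ B, 2 ≤ b)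
    (qs : ℤ) (hqs0 : 0 < qs) (hqsp : qs < negCont A)
    (hqs1 : negCont A.tail * qs ≡ 1 [ZMOD negCont A]) :
    Complementary A B ↔
      (qs : ℚ) / (negCont A : ℚ) + (negCont B.tail : ℚ) / (negCont B : ℚ) = 1 := by
  rcases A with _ | ⟨a, T⟩
  · exfalso
    rw [show negCont ([] : List ℤ) = 1 from rfl] at hqsp
    omega
  · have hKA : negCont (a :: T) = (ct (a :: T)).p := negCont_ct _
    have hKAt : negCont ((a :: T).tail) = (ct (a :: T)).q := by
      show negCont T = _
      rw [negCont_ct T, ct_cons]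
    obtain ⟨A1, A2, A3, A4, A5, A6, A7⟩ := ct_bounds (a :: T) hA
    obtain ⟨bA1, bA2, bA3, bA4⟩ := ct_cons_pos a T hA
    have detA := ct_det (a :: T)
    rw [hKA] at hqsp
    have hdvd : (ct (a :: T)).p ∣ 1 - (ct (a :: T)).q * qs := by
      have := Int.ModEq.dvd hqs1
      rwa [hKA, hKAt] at this
    obtain ⟨k, hk⟩ := hdvd
    have hp0 : (0 : ℤ) < (ct (a :: T)).p := by linarith
    have hqq : qs = (ct (a :: T)).p' := by
      have e1 : qs * (ct (a :: T)).q - (ct (a :: T)).p * (-k) = 1 := by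
        linear_combination -hk
      exact (uniq hp0 e1 detA hqs0 hqsp (by linarith) A5).1
    have hpQ : (((ct (a :: T)).p : ℤ) : ℚ) ≠ 0 := by
      exact_mod_cast hp0.ne'
    by_cases hBn : B = []
    · subst hBn
      constructor
      · intro h
        exact absurd rfl (compl_fwd h).2.1
      · intro h
        exfalso
        simp only [List.tail_nil, show negCont ([] : List ℤ) = 1 from rfl, hKA] at h
        push_cast at h
        have h0 : (qs : ℚ) / ((ct (a :: T)).p : ℚ) = 0 := by linarith
        rcases div_eq_zero_iff.mp h0 with h' | h'
        · have : qs = 0 := by exact_mod_cast h'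
          omega
        · exact hpQ h'
    · obtain ⟨c, M, rfl⟩ := List.exists_cons_of_ne_nil hBn
      have hKB : negCont (c :: M) = (ct (c :: M)).p := negCont_ct _
      have hKBt : negCont ((c :: M).tail) = (ct (c :: M)).q := by
        show negCont M = _
        rw [negCont_ct M, ct_cons]
      obtain ⟨B1, B2, B3, B4, B5, B6, B7⟩ := ct_bounds (c :: M) hB
      have detB := ct_det (c :: M)
      have hr0 : (0 : ℤ) < (ct (c :: M)).p := by
        have := (ct_cons_pos c M hB).2.2.2
        linarith
      have hrQ : (((ct (c :: M)).p : ℤ) : ℚ) ≠ 0 := by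
        exact_mod_cast hr0.ne'
      rw [hKA, hKB, hKBt, hqq]
      constructor
      · intro h
        obtain ⟨-, -, e1, -, e3, -⟩ := compl_fwd h
        rw [e1, e3]
        push_cast
        field_simp
        ring
      · intro h
        have hEQ : (((ct (a :: T)).p' : ℤ) : ℚ) * ((ct (c :: M)).p : ℚ) +
            ((ct (c :: M)).q : ℚ) * ((ct (a :: T)).p : ℚ) =
            ((ct (a :: T)).p : ℚ) * ((ct (c :: M)).p : ℚ) := by
          field_simp at h
          linear_combination h
        have hE : (ct (a :: T)).p' * (ct (c :: M)).p + (ct (c :: M)).q * (ct (a :: T)).p =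
            (ct (a :: T)).p * (ct (c :: M)).p := by
          exact_mod_cast hEQ
        have cop1 : IsCoprime ((ct (a :: T)).p) ((ct (a :: T)).p') :=
          ⟨-(ct (a :: T)).q', (ct (a :: T)).q, by linear_combination detA⟩
        have cop2 : IsCoprime ((ct (c :: M)).p) ((ct (c :: M)).p - (ct (c :: M)).q) := by
          have c0 : IsCoprime ((ct (c :: M)).p) (-(ct (c :: M)).q) :=
            IsCoprime.neg_right ⟨-(ct (c :: M)).q', (ct (c :: M)).p', by linear_combination detB⟩
          have c1 := c0.add_mul_left_right 1
          have e : -(ct (c :: M)).q + (ct (c :: M)).p * 1 = (ct (c :: M)).p - (ct (c :: M)).q := by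
            ring
          rwa [e] at c1
        have d1 : (ct (a :: T)).p ∣ (ct (a :: T)).p' * (ct (c :: M)).p :=
          ⟨(ct (c :: M)).p - (ct (c :: M)).q, by linear_combination hE⟩
        have d2 : (ct (a :: T)).p ∣ (ct (c :: M)).p := cop1.dvd_of_dvd_mul_left d1
        have d3 : (ct (c :: M)).p ∣ (ct (a :: T)).p * ((ct (c :: M)).p - (ct (c :: M)).q) :=
          ⟨(ct (a :: T)).p', by linear_combination -hE⟩
        have d4 : (ct (c :: M)).p ∣ (ct (a :: T)).p := cop2.dvd_of_dvd_mul_right d3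
        have hrp : (ct (c :: M)).p = (ct (a :: T)).p :=
          Int.dvd_antisymm (le_of_lt hr0) (le_of_lt hp0) d4 d2
        have hu : (ct (c :: M)).q = (ct (a :: T)).p - (ct (a :: T)).p' := by
          have hE2 := hE
          rw [hrp] at hE2
          have h5 : (ct (a :: T)).p * ((ct (c :: M)).q) =
              (ct (a :: T)).p * ((ct (a :: T)).p - (ct (a :: T)).p') := by
            linear_combination hE2
          exact mul_left_cancel₀ hp0.ne' h5
        exact inv_compl ((a :: T).length + (c :: M).length) _ _ le_rfl (by simp) (by simp)
          hA hB hrp hu
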